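/- arXiv:math/9909046 — 5 statements merged into one kernel-verified Lean document; each statement's English description precedes it below -/
import Mathlib

section
/- Let φ : B(H) → B(H) be multiplicative (φ(AB) = φ(A)φ(B)) and suppose that for every rank-one projection P, φ(P) is a rank-one projection, and for every A in B(H) and λ ∈ ℂ, φ(λA) is a limit in operator norm of operators λ U_n A U_n* with U_n unitary. Then for every rank-one projection P and every λ ∈ ℂ, φ(λP) = λφ(P). -/
open scoped ComplexOrder

noncomputable def rankOne {H : Type*} [NormedAddCommGroup H] [InnerProductSpace ℂ H]
    (x y : H) : H →L[ℂ] H :=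
  (ContinuousLinearMap.toSpanSingleton ℂ x).comp (innerSL ℂ y)

def IsRankOneProj {H : Type*} [NormedAddCommGroup H] [InnerProductSpace ℂ H]
    [CompleteSpace H] (P : H →L[ℂ] H) : Prop :=
  IsSelfAdjoint P ∧ P * P = P ∧ Module.rank ℂ (LinearMap.range (P : H →ₗ[ℂ] H)) = 1

theorem stmt5 {H : Type*} [NormedAddCommGroup H] [InnerProductSpace ℂ H] [CompleteSpace H]
    [TopologicalSpace.SeparableSpace H]
    (phi : (H →L[ℂ] H) → (H →L[ℂ] H))
    (hmul : ∀ A B, phi (A * B) = phi A * phi B)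
    (hproj : ∀ P, IsRankOneProj P → IsRankOneProj (phi P))
    (hloc : ∀ (A : H →L[ℂ] H) (lam : ℂ), ∃ U : ℕ → H →L[ℂ] H,
      (∀ n, U n ∈ unitary (H →L[ℂ] H)) ∧
      Filter.Tendsto (fun n => lam • (U n * A * star (U n))) Filter.atTop (nhds (phi (lam • A))))
    (P : H →L[ℂ] H) (hP : IsRankOneProj P) (lam : ℂ) :
    phi (lam • P) = lam • phi P := by
  obtain ⟨hPsa, hP2, hPrank⟩ := hP
  obtain ⟨hQsa, hQ2, hQrank⟩ := hproj P ⟨hPsa, hP2, hPrank⟩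
  set Q := phi P with hQdef
  set T := phi (lam • P) with hTdef
  have hzrange : LinearMap.range ((0 : H →L[ℂ] H) : H →ₗ[ℂ] H) = ⊥ := by
    ext x; simp [eq_comm]
  have hPne : P ≠ 0 := by
    rintro rfl
    rw [hzrange] at hPrank
    simp at hPrank
  have hQne : Q ≠ 0 := by
    intro h
    rw [h, hzrange] at hQrank
    simp at hQrank
  -- T * Q = T and Q * T = T
  have hTQ : T * Q = T := by
    rw [hTdef, hQdef, ← hmul, smul_mul_assoc, hP2]
  have hQT : Q * T = T := by
    rw [hTdef, hQdef, ← hmul, mul_smul_comm, hP2]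
  -- limit facts
  obtain ⟨U, hU, htend⟩ := hloc P lam
  set S : ℕ → H →L[ℂ] H := fun n => U n * P * star (U n) with hSdef
  have hS2 : ∀ n, S n * S n = S n := by
    intro n
    have h1 : star (U n) * U n = 1 := (Unitary.mem_iff.mp (hU n)).1
    show (U n * P * star (U n)) * (U n * P * star (U n)) = U n * P * star (U n)
    calc (U n * P * star (U n)) * (U n * P * star (U n))
        = U n * (P * ((star (U n) * U n) * (P * star (U n)))) := by simp only [mul_assoc]
      _ = U n * (P * (P * star (U n))) := by rw [h1, one_mul]
      _ = U n * P * star (U n) := by rw [← mul_assoc P P (star (U n)), hP2, ← mul_assoc]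
  have hSne : ∀ n, S n ≠ 0 := by
    intro n h
    apply hPne
    have h1 : star (U n) * U n = 1 := (Unitary.mem_iff.mp (hU n)).1
    have : star (U n) * S n * U n = P := by
      show star (U n) * (U n * P * star (U n)) * U n = P
      calc star (U n) * (U n * P * star (U n)) * U n
          = star (U n) * (U n * (P * (star (U n) * U n))) := by simp only [mul_assoc]
        _ = P := by rw [h1, mul_one, ← mul_assoc, h1, one_mul]
    rw [h] at this
    simpa using this.symm
  -- T * T = lam • T
  have hTT : T * T = lam • T := by
    have h1 : Filter.Tendsto (fun n => (lam • S n) * (lam • S n)) Filter.atTop (nhds (T * T)) :=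
      htend.mul htend
    have h2 : (fun n => (lam • S n) * (lam • S n)) = fun n => lam • (lam • S n) := by
      funext n
      rw [smul_mul_assoc, mul_smul_comm, hS2 n, smul_smul, mul_smul]
    rw [h2] at h1
    have h3 : Filter.Tendsto (fun n => lam • (lam • S n)) Filter.atTop (nhds (lam • T)) :=
      htend.const_smul lam
    exact tendsto_nhds_unique h1 h3
  -- get a spanning vector for range Q
  obtain ⟨⟨e, he_mem⟩, he_ne, he_span⟩ := rank_eq_one_iff.mp hQrank
  have heQ : Q e = e := by
    obtain ⟨y, hy⟩ := he_mem
    have : Q (Q y) = Q y := by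
      have := congrFun (congrArg (DFunLike.coe) hQ2) y
      simpa using this
    rw [show Q y = e from hy] at this
    exact this
  have he0 : e ≠ 0 := fun h => he_ne (Subtype.ext (by simpa using h))
  -- Q x is a multiple of e for all x
  have hQx : ∀ x, ∃ c : ℂ, Q x = c • e := by
    intro x
    obtain ⟨c, hc⟩ := he_span ⟨Q x, LinearMap.mem_range.mpr ⟨x, rfl⟩⟩
    exact ⟨c, by simpa using congrArg Subtype.val hc.symm⟩
  -- T e is a multiple of e
  have hTe_mem : T e ∈ LinearMap.range (Q : H →ₗ[ℂ] H) := by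
    refine LinearMap.mem_range.mpr ⟨T e, ?_⟩
    have := congrFun (congrArg (DFunLike.coe) hQT) e
    simpa using this
  obtain ⟨mu, hmu⟩ : ∃ mu : ℂ, T e = mu • e := by
    obtain ⟨c, hc⟩ := he_span ⟨T e, hTe_mem⟩
    exact ⟨c, by simpa using congrArg Subtype.val hc.symm⟩
  -- T = mu • Q
  have hTmuQ : T = mu • Q := by
    ext x
    obtain ⟨c, hc⟩ := hQx x
    have hTx : T x = T (Q x) := by
      have := congrFun (congrArg (DFunLike.coe) hTQ) x
      simpa using this.symm
    rw [hTx, hc]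
    simp only [map_smul, hmu]
    rw [ContinuousLinearMap.smul_apply, hc]
    rw [smul_comm]
  -- mu * mu = lam * mu
  have hmusq : mu * mu = lam * mu := by
    have h1 : (mu * mu) • Q = (lam * mu) • Q := by
      have := hTT
      rw [hTmuQ] at this
      rw [smul_mul_assoc, mul_smul_comm, hQ2, smul_smul, smul_smul] at this
      exact this
    by_contra h
    have h2 := sub_eq_zero.mpr h1
    rw [← sub_smul] at h2
    rcases smul_eq_zero.mp h2 with h' | h'
    · exact h (sub_eq_zero.mp h')
    · exact hQne h' 
  have hfact : mu * (mu - lam) = 0 := by ring_nf; linear_combination hmusq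
  rcases mul_eq_zero.mp hfact with h0 | h0
  · -- mu = 0, so T = 0; show lam = 0
    have hT0 : T = 0 := by rw [hTmuQ, h0, zero_smul]
    have hlam0 : lam = 0 := by
      by_contra hlam
      have hSlim : Filter.Tendsto S Filter.atTop (nhds 0) := by
        have h1 : Filter.Tendsto (fun n => lam • S n) Filter.atTop (nhds (0 : H →L[ℂ] H)) := by
          rw [← hT0]; exact htend
        have h2 := h1.const_smul lam⁻¹
        simp only [smul_smul, inv_mul_cancel₀ hlam, one_smul, smul_zero] at h2
        exact h2
      have hnorm : Filter.Tendsto (fun n => ‖S n‖) Filter.atTop (nhds 0) := by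
        simpa using hSlim.norm
      have hge : ∀ n, (1 : ℝ) ≤ ‖S n‖ := by
        intro n
        have hpos : 0 < ‖S n‖ := norm_pos_iff.mpr (hSne n)
        have : ‖S n‖ ≤ ‖S n‖ * ‖S n‖ := by
          calc ‖S n‖ = ‖S n * S n‖ := by rw [hS2 n]
            _ ≤ ‖S n‖ * ‖S n‖ := norm_mul_le _ _
        nlinarith
      have : ∀ᶠ n in Filter.atTop, ‖S n‖ < 1 := by
        have := hnorm.eventually (eventually_lt_nhds (by norm_num : (0:ℝ) < 1))
        exact this
      obtain ⟨n, hn⟩ := this.exists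
      linarith [hge n]
    rw [hlam0, zero_smul]
    exact hT0
  · -- mu = lam
    have : mu = lam := sub_eq_zero.mp h0
    rw [hTmuQ, this]
end

section
/- Let U be a linear isometry on a separable complex Hilbert space H. Then there exists a sequence (U_n) of unitary operators converging to U in the strong operator topology, and consequently U_n A U_n* → U A U* in operator norm for every compact operator A. -/
open scoped ComplexOrder

open Module Metric Filter Topology

set_option maxHeartbeats 1000000

section Aux

variable {E F : Type*} [NormedAddCommGroup E] [InnerProductSpace ℂ E]
  [NormedAddCommGroup F] [InnerProductSpace ℂ F]

lemma aux_orthonormal_countable [TopologicalSpace.SeparableSpace E]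
    {ι : Type*} {v : ι → E} (hv : Orthonormal ℂ v) : Countable ι := by
  apply Pairwise.countable_of_isOpen_disjoint (s := fun i => Metric.ball (v i) (1/2))
  · intro i j hij
    apply Metric.ball_disjoint_ball
    have h2 : ‖v i - v j‖ ^ 2 = 2 := by
      rw [@norm_sub_sq ℂ, hv.1 i, hv.1 j, hv.2 hij]
      norm_num
    have h1 : (1:ℝ) ≤ ‖v i - v j‖ := by nlinarith [norm_nonneg (v i - v j)]
    rw [dist_eq_norm]; linarith
  · intro i; exact Metric.isOpen_ball
  · intro i; exact Metric.nonempty_ball.2 (by norm_num)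

lemma aux_hilbertBasis_nat [CompleteSpace E] [TopologicalSpace.SeparableSpace E]
    (h : ¬ FiniteDimensional ℂ E) : Nonempty (HilbertBasis ℕ ℂ E) := by
  classical
  obtain ⟨w, b, hb⟩ := exists_hilbertBasis ℂ E
  have hcount : Countable w := aux_orthonormal_countable b.orthonormal
  have hinf : Infinite w := by
    by_contra hfin
    have : Finite w := not_infinite_iff_finite.mp hfin
    have : Fintype w := Fintype.ofFinite w
    exact h (Module.Basis.finiteDimensional_of_finite b.toOrthonormalBasis.toBasis)
  obtain ⟨dd⟩ := nonempty_denumerable w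
  let e : ℕ ≃ w := (Denumerable.eqv w).symm
  have horth : Orthonormal ℂ (fun n => b (e n)) := b.orthonormal.comp e e.injective
  refine ⟨HilbertBasis.mk horth ?_⟩
  have hrange : Set.range (fun n => b (e n)) = Set.range (⇑b) := by
    ext x
    constructor
    · rintro ⟨n, rfl⟩; exact ⟨e n, rfl⟩
    · rintro ⟨i, rfl⟩; exact ⟨e.symm i, by simp⟩
  rw [hrange]
  exact ge_of_eq b.dense_span

lemma aux_isometryEquiv [CompleteSpace E] [CompleteSpace F]
    [TopologicalSpace.SeparableSpace E] [TopologicalSpace.SeparableSpace F]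
    (hfd : FiniteDimensional ℂ E ↔ FiniteDimensional ℂ F)
    (hfr : finrank ℂ E = finrank ℂ F) : Nonempty (E ≃ₗᵢ[ℂ] F) := by
  by_cases hE : FiniteDimensional ℂ E
  · have hF : FiniteDimensional ℂ F := hfd.1 hE
    exact ⟨(stdOrthonormalBasis ℂ E).repr.trans
      (((stdOrthonormalBasis ℂ F).reindex (finCongr hfr.symm)).repr.symm)⟩
  · have hF : ¬ FiniteDimensional ℂ F := fun h => hE (hfd.2 h)
    obtain ⟨bE⟩ := aux_hilbertBasis_nat hE
    obtain ⟨bF⟩ := aux_hilbertBasis_nat hF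
    exact ⟨bE.repr.trans bF.repr.symm⟩

variable {H : Type*} [NormedAddCommGroup H] [InnerProductSpace ℂ H] [CompleteSpace H]

lemma aux_glue (K K' : Submodule ℂ H) [K.HasOrthogonalProjection] [K'.HasOrthogonalProjection]
    (A : K ≃ₗᵢ[ℂ] K') (B : (Kᗮ : Submodule ℂ H) ≃ₗᵢ[ℂ] ((K'ᗮ : Submodule ℂ H))) :
    ∃ V : H →L[ℂ] H, V ∈ unitary (H →L[ℂ] H) ∧ (∀ x : K, V x = (A x : H)) ∧
      ∀ x, ‖V x‖ = ‖x‖ := by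
  set V : H →L[ℂ] H :=
    K'.subtypeL.comp (A.toLinearIsometry.toContinuousLinearMap.comp (Submodule.orthogonalProjectionOnto K))
    + (K'ᗮ).subtypeL.comp
        (B.toLinearIsometry.toContinuousLinearMap.comp (Submodule.orthogonalProjectionOnto Kᗮ)) with hVdef
  have hVapply : ∀ x, V x =
      ((A (Submodule.orthogonalProjectionOnto K x) : H)) + ((B (Submodule.orthogonalProjectionOnto Kᗮ x) : H)) :=
    fun x => rfl
  have hnorm : ∀ x, ‖V x‖ = ‖x‖ := by
    intro x
    have h1 : ((A (Submodule.orthogonalProjectionOnto K x) : H)) ∈ K' := (A _).2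
    have h2 : ((B (Submodule.orthogonalProjectionOnto Kᗮ x) : H)) ∈ K'ᗮ := (B _).2
    have hinner : (inner ℂ ((A (Submodule.orthogonalProjectionOnto K x) : H))
        ((B (Submodule.orthogonalProjectionOnto Kᗮ x) : H)) : ℂ) = 0 :=
      (Submodule.mem_orthogonal _ _).1 h2 _ h1
    have hinner' : (inner ℂ ((Submodule.orthogonalProjectionOnto K x : H))
        ((Submodule.orthogonalProjectionOnto Kᗮ x : H)) : ℂ) = 0 :=
      (Submodule.mem_orthogonal _ _).1 (Submodule.orthogonalProjectionOnto Kᗮ x).2 _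
        (Submodule.orthogonalProjectionOnto K x).2
    have e1 : ‖V x‖ ^ 2 = ‖(Submodule.orthogonalProjectionOnto K x : H)‖ ^ 2
        + ‖(Submodule.orthogonalProjectionOnto Kᗮ x : H)‖ ^ 2 := by
      rw [hVapply, @norm_add_sq ℂ, hinner]
      have nA : ‖((A (Submodule.orthogonalProjectionOnto K x) : H))‖ = ‖(Submodule.orthogonalProjectionOnto K x : H)‖ :=
        A.norm_map _
      have nB : ‖((B (Submodule.orthogonalProjectionOnto Kᗮ x) : H))‖
          = ‖(Submodule.orthogonalProjectionOnto Kᗮ x : H)‖ := B.norm_map _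
      rw [nA, nB]
      simp
    have e2 : ‖x‖ ^ 2 = ‖(Submodule.orthogonalProjectionOnto K x : H)‖ ^ 2
        + ‖(Submodule.orthogonalProjectionOnto Kᗮ x : H)‖ ^ 2 := by
      conv_lhs => rw [← Submodule.starProjection_add_starProjection_orthogonal (K := K) x, Submodule.starProjection_apply, Submodule.starProjection_apply]
      rw [@norm_add_sq ℂ, hinner']
      simp
    have := e1.trans e2.symm
    exact (sq_eq_sq₀ (norm_nonneg _) (norm_nonneg _)).1 this
  have hK : ∀ x : K, V x = (A x : H) := by
    intro x
    rw [hVapply, Submodule.orthogonalProjectionOnto_mem_subspace_eq_self,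
      Submodule.orthogonalProjectionOnto_orthogonal_apply_eq_zero x.2]
    simp
  have hKp : ∀ y : (Kᗮ : Submodule ℂ H), V y = (B y : H) := by
    intro y
    rw [hVapply, Submodule.orthogonalProjectionOnto_apply_of_mem_orthogonal y.2,
      Submodule.orthogonalProjectionOnto_mem_subspace_eq_self]
    simp
  have hsurj : Function.Surjective V := by
    intro y
    refine ⟨(A.symm (Submodule.orthogonalProjectionOnto K' y) : H) + (B.symm (Submodule.orthogonalProjectionOnto K'ᗮ y) : H), ?_⟩
    rw [map_add, hK, hKp]
    simp only [LinearIsometryEquiv.apply_symm_apply]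
    exact Submodule.starProjection_add_starProjection_orthogonal (K := K') y
  have hiso : ∀ x y : H, inner ℂ (V x) (V y) = inner ℂ x y := by
    intro x y
    exact LinearIsometry.inner_map_map ⟨(V : H →ₗ[ℂ] H), hnorm⟩ x y
  have hstar : star V * V = 1 := by
    ext x
    refine ext_inner_right ℂ fun v => ?_
    simp only [ContinuousLinearMap.mul_apply, ContinuousLinearMap.one_apply,
      ContinuousLinearMap.star_eq_adjoint]
    rw [ContinuousLinearMap.adjoint_inner_left, hiso]
  have hone : ∀ z, star V (V z) = z := by
    intro z
    rw [← ContinuousLinearMap.mul_apply, hstar, ContinuousLinearMap.one_apply]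
  have hstar2 : V * star V = 1 := by
    ext y
    obtain ⟨x, rfl⟩ := hsurj y
    simp only [ContinuousLinearMap.mul_apply, ContinuousLinearMap.one_apply]
    rw [hone]
  exact ⟨V, Unitary.mem_iff.2 ⟨hstar, hstar2⟩, hK, hnorm⟩

lemma aux_sot_compact {T : ℕ → H →L[ℂ] H} {S : H →L[ℂ] H}
    (hb : ∀ n, ‖T n‖ ≤ 1) (hS : ‖S‖ ≤ 1)
    (hsot : ∀ x, Tendsto (fun n => T n x) atTop (nhds (S x)))
    {A : H →L[ℂ] H} (hA : IsCompactOperator A) :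
    Tendsto (fun n => ‖(T n - S).comp A‖) atTop (nhds 0) := by
  rw [Metric.tendsto_atTop]
  intro ε hε
  have hA' : IsCompactOperator ⇑(A : H →ₗ[ℂ] H) := hA
  have hM : IsCompact (closure ((A : H →ₗ[ℂ] H) '' Metric.closedBall 0 1)) :=
    hA'.isCompact_closure_image_closedBall 1
  have htb : TotallyBounded ((A : H →ₗ[ℂ] H) '' Metric.closedBall 0 1) :=
    hM.totallyBounded.subset subset_closure
  obtain ⟨t, htfin, htcover⟩ := Metric.totallyBounded_iff.1 htb (ε/4) (by linarith)
  have key : ∀ᶠ n in atTop, ∀ c ∈ t, ‖T n c - S c‖ < ε/4 := by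
    rw [Filter.eventually_all_finite htfin]
    intro c _
    have h := Metric.tendsto_atTop.1 (hsot c) (ε/4) (by linarith)
    obtain ⟨N, hN⟩ := h
    exact Filter.eventually_atTop.2 ⟨N, fun n hn => by
      have := hN n hn; rwa [dist_eq_norm] at this⟩
  obtain ⟨N, hN⟩ := Filter.eventually_atTop.1 key
  refine ⟨N, fun n hn => ?_⟩
  rw [Real.dist_eq, sub_zero, abs_of_nonneg (norm_nonneg _)]
  have hball : ∀ u : H, ‖u‖ ≤ 1 → ‖(T n - S) (A u)‖ ≤ 3 * (ε/4) := by
    intro u hu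
    have hmem : A u ∈ (A : H →ₗ[ℂ] H) '' Metric.closedBall 0 1 :=
      ⟨u, mem_closedBall_zero_iff.2 hu, rfl⟩
    have := htcover hmem
    simp only [Set.mem_iUnion] at this
    obtain ⟨c, hct, hcball⟩ := this
    have hdist : ‖A u - c‖ < ε/4 := by
      rw [← dist_eq_norm]; exact Metric.mem_ball.1 hcball
    have e1 : ‖T n (A u) - T n c‖ ≤ ε/4 := by
      rw [← map_sub]
      calc ‖T n (A u - c)‖ ≤ ‖T n‖ * ‖A u - c‖ := (T n).le_opNorm _
        _ ≤ 1 * (ε/4) := by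
            apply mul_le_mul (hb n) hdist.le (norm_nonneg _) zero_le_one
        _ = ε/4 := one_mul _
    have e2 : ‖T n c - S c‖ < ε/4 := hN n hn c hct
    have e3 : ‖S c - S (A u)‖ ≤ ε/4 := by
      rw [← map_sub]
      calc ‖S (c - A u)‖ ≤ ‖S‖ * ‖c - A u‖ := S.le_opNorm _
        _ ≤ 1 * (ε/4) := by
            apply mul_le_mul hS (by rw [norm_sub_rev]; exact hdist.le) (norm_nonneg _) zero_le_one
        _ = ε/4 := one_mul _
    have : (T n - S) (A u) = (T n (A u) - T n c) + (T n c - S c) + (S c - S (A u)) := by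
      simp only [ContinuousLinearMap.sub_apply]
      abel
    rw [this]
    calc ‖(T n (A u) - T n c) + (T n c - S c) + (S c - S (A u))‖
        ≤ ‖(T n (A u) - T n c) + (T n c - S c)‖ + ‖S c - S (A u)‖ := norm_add_le _ _
      _ ≤ ‖T n (A u) - T n c‖ + ‖T n c - S c‖ + ‖S c - S (A u)‖ := by
            have := norm_add_le (T n (A u) - T n c) (T n c - S c)
            linarith
      _ ≤ ε/4 + ε/4 + ε/4 := by linarith
      _ = 3 * (ε/4) := by ring
  have hop : ‖(T n - S).comp A‖ ≤ 3 * (ε/4) := by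
    apply ContinuousLinearMap.opNorm_le_bound _ (by linarith)
    intro x
    rcases eq_or_ne x 0 with rfl | hx
    · simp
    · have hxn : ‖x‖ ≠ 0 := norm_ne_zero_iff.2 hx
      set u : H := (‖x‖ : ℂ)⁻¹ • x with hu
      have hun : ‖u‖ = 1 := by
        rw [hu, norm_smul]
        simp [hxn]
      have hx' : x = (‖x‖ : ℂ) • u := by
        rw [hu, smul_smul]
        rw [mul_inv_cancel₀ (by exact_mod_cast hxn)]
        simp
      calc ‖(T n - S).comp A x‖ = ‖(T n - S) (A x)‖ := rfl
        _ = ‖x‖ * ‖(T n - S) (A u)‖ := by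
            conv_lhs => rw [hx']
            rw [map_smul, map_smul, norm_smul]
            simp
        _ ≤ ‖x‖ * (3 * (ε/4)) := by
            apply mul_le_mul_of_nonneg_left (hball u hun.le) (norm_nonneg _)
        _ = 3 * (ε/4) * ‖x‖ := by ring
  linarith

lemma aux_adjoint_compact (A : H →L[ℂ] H) (hA : IsCompactOperator A) :
    IsCompactOperator (ContinuousLinearMap.adjoint A) := by
  set B := ContinuousLinearMap.adjoint A with hB
  have hAB : IsCompactOperator ⇑(A.comp B) := hA.comp_clm B
  have hBlin : IsCompactOperator ⇑((B : H →ₗ[ℂ] H)) ↔ IsCompactOperator ⇑B := Iff.rfl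
  rw [show ⇑B = ⇑((B : H →ₗ[ℂ] H)) from rfl,
    isCompactOperator_iff_isCompact_closure_image_closedBall (B : H →ₗ[ℂ] H) one_pos]
  refine isCompact_iff_totallyBounded_isComplete.2 ⟨?_, isClosed_closure.isComplete⟩
  apply TotallyBounded.closure
  rw [Metric.totallyBounded_iff]
  intro ε hε
  -- totally bounded image of A ∘ B
  have hAB' : IsCompactOperator ⇑((A.comp B : H →L[ℂ] H) : H →ₗ[ℂ] H) := hAB
  have hM : IsCompact (closure (((A.comp B : H →L[ℂ] H) : H →ₗ[ℂ] H) '' Metric.closedBall 0 1)) :=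
    hAB'.isCompact_closure_image_closedBall 1
  have htb : TotallyBounded (((A.comp B : H →L[ℂ] H) : H →ₗ[ℂ] H) '' Metric.closedBall 0 1) :=
    hM.totallyBounded.subset subset_closure
  set δ : ℝ := ε^2/8 with hδ
  obtain ⟨t, htfin, htcover⟩ := Metric.totallyBounded_iff.1 htb δ (by positivity)
  -- for each c in t, choose a point in the unit ball mapping near c if possible
  classical
  have hchoice : ∀ c : H, (∃ y ∈ Metric.closedBall (0:H) 1, ‖A (B y) - c‖ < δ) →
      ∃ y, ‖y‖ ≤ 1 ∧ ‖A (B y) - c‖ < δ := by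
    rintro c ⟨y, hy, hyc⟩
    exact ⟨y, mem_closedBall_zero_iff.1 hy, hyc⟩
  set pick : H → H := fun c =>
    if h : ∃ y ∈ Metric.closedBall (0:H) 1, ‖A (B y) - c‖ < δ then (hchoice c h).choose else 0
    with hpick
  refine ⟨(fun c => B (pick c)) '' t, htfin.image _, ?_⟩
  rintro z ⟨y, hy, rfl⟩
  have hy1 : ‖y‖ ≤ 1 := mem_closedBall_zero_iff.1 hy
  have hmem : A (B y) ∈ ((A.comp B : H →L[ℂ] H) : H →ₗ[ℂ] H) '' Metric.closedBall 0 1 := ⟨y, hy, rfl⟩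
  have := htcover hmem
  simp only [Set.mem_iUnion] at this
  obtain ⟨c, hct, hcball⟩ := this
  have hyc : ‖A (B y) - c‖ < δ := by rw [← dist_eq_norm]; exact Metric.mem_ball.1 hcball
  have hex : ∃ y' ∈ Metric.closedBall (0:H) 1, ‖A (B y') - c‖ < δ := ⟨y, hy, hyc⟩
  have hpc : ‖pick c‖ ≤ 1 ∧ ‖A (B (pick c)) - c‖ < δ := by
    simp only [hpick]
    rw [dif_pos hex]
    exact (hchoice c hex).choose_spec
  refine Set.mem_iUnion.2 ⟨B (pick c), Set.mem_iUnion.2 ⟨⟨c, hct, rfl⟩, ?_⟩⟩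
  rw [Metric.mem_ball, dist_eq_norm]
  -- ‖B y - B (pick c)‖ < ε
  set w : H := y - pick c with hw
  have hwnorm : ‖w‖ ≤ 2 := by
    rw [hw]
    calc ‖y - pick c‖ ≤ ‖y‖ + ‖pick c‖ := norm_sub_le _ _
      _ ≤ 2 := by linarith [hpc.1]
  have hABw : ‖A (B w)‖ < 2*δ := by
    rw [hw, map_sub, map_sub]
    calc ‖A (B y) - A (B (pick c))‖
        = ‖(A (B y) - c) - (A (B (pick c)) - c)‖ := by rw [sub_sub_sub_cancel_right]
      _ ≤ ‖A (B y) - c‖ + ‖A (B (pick c)) - c‖ := norm_sub_le _ _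
      _ < δ + δ := add_lt_add hyc hpc.2
      _ = 2*δ := by ring
  have hsq : ‖B w‖^2 ≤ ‖w‖ * ‖A (B w)‖ := by
    rw [@norm_sq_eq_re_inner ℂ]
    have : inner ℂ (B w) (B w) = inner ℂ w (A (B w)) := by
      rw [hB]
      exact ContinuousLinearMap.adjoint_inner_left A (ContinuousLinearMap.adjoint A w) w
    rw [this]
    calc RCLike.re (inner ℂ w (A (B w))) ≤ ‖inner ℂ w (A (B w))‖ := RCLike.re_le_norm _
      _ ≤ ‖w‖ * ‖A (B w)‖ := norm_inner_le_norm _ _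
  have h2 : ‖B w‖^2 < ε^2 := by
    calc ‖B w‖^2 ≤ ‖w‖ * ‖A (B w)‖ := hsq
      _ ≤ 2 * ‖A (B w)‖ := by
          apply mul_le_mul_of_nonneg_right hwnorm (norm_nonneg _)
      _ < 2 * (2*δ) := by
          apply mul_lt_mul_of_pos_left hABw (by norm_num)
      _ = ε^2/2 := by rw [hδ]; ring
      _ < ε^2 := by nlinarith [pow_pos hε 2]
  have : ‖B w‖ < ε := by nlinarith [norm_nonneg (B w)]
  rw [hw] at this
  rwa [map_sub] at this

end Aux

lemma aux_orth_infinite {H : Type*} [NormedAddCommGroup H] [InnerProductSpace ℂ H]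
    [CompleteSpace H] (L : Submodule ℂ H) [L.HasOrthogonalProjection]
    (hL : FiniteDimensional ℂ L) (hH : ¬ FiniteDimensional ℂ H) :
    ¬ FiniteDimensional ℂ (Lᗮ : Submodule ℂ H) := by
  intro hfin
  apply hH
  have hsup : L ⊔ Lᗮ = ⊤ := Submodule.sup_orthogonal_of_hasOrthogonalProjection
  have hfin2 : FiniteDimensional ℂ ((L ⊔ Lᗮ : Submodule ℂ H) : Type _) :=
    Submodule.finiteDimensional_sup L Lᗮ
  rw [hsup] at hfin2
  exact (Submodule.topEquiv : (⊤ : Submodule ℂ H) ≃ₗ[ℂ] H).finiteDimensional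

theorem stmt12 {H : Type*} [NormedAddCommGroup H] [InnerProductSpace ℂ H] [CompleteSpace H]
    [TopologicalSpace.SeparableSpace H]
    (U : H →L[ℂ] H) (hU : ∀ x, ‖U x‖ = ‖x‖) :
    ∃ V : ℕ → H →L[ℂ] H,
      (∀ n, V n ∈ unitary (H →L[ℂ] H)) ∧
      (∀ x : H, Filter.Tendsto (fun n => V n x) Filter.atTop (nhds (U x))) ∧
      (∀ A : H →L[ℂ] H, IsCompactOperator A →
        Filter.Tendsto (fun n => V n * A * star (V n)) Filter.atTop
          (nhds (U * A * ContinuousLinearMap.adjoint U))) := by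
  classical
  haveI : Nonempty H := ⟨0⟩
  haveI : SecondCountableTopology H := UniformSpace.secondCountable_of_separable H
  set d : ℕ → H := TopologicalSpace.denseSeq H with hd
  have hdr : DenseRange d := TopologicalSpace.denseRange_denseSeq H
  have hUinj : Function.Injective U := by
    intro a b hab
    have h0 : ‖a - b‖ = 0 := by rw [← hU, map_sub, hab, sub_self, norm_zero]
    simpa [sub_eq_zero] using norm_eq_zero.1 h0
  have hUnorm : ‖U‖ ≤ 1 := ContinuousLinearMap.opNorm_le_bound _ zero_le_one
    (fun x => by rw [hU, one_mul])
  have hex : ∀ n : ℕ, ∃ V : H →L[ℂ] H, V ∈ unitary (H →L[ℂ] H) ∧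
      (∀ i < n, V (d i) = U (d i)) ∧ ∀ x, ‖V x‖ = ‖x‖ := by
    intro n
    set K : Submodule ℂ H := Submodule.span ℂ (d '' Set.Iio n) with hK
    haveI hKfd : FiniteDimensional ℂ K :=
      FiniteDimensional.span_of_finite ℂ ((Set.finite_Iio n).image d)
    set K' : Submodule ℂ H := K.map (U : H →ₗ[ℂ] H) with hK'
    haveI hK'fd : FiniteDimensional ℂ K' := Module.Finite.map K (U : H →ₗ[ℂ] H)
    have hUinj' : Function.Injective (U : H →ₗ[ℂ] H) := hUinj
    set eKK' : K ≃ₗ[ℂ] K' := Submodule.equivMapOfInjective (U : H →ₗ[ℂ] H) hUinj' K with heKK'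
    have heapp : ∀ x : K, ((eKK' x : H)) = U x := fun x =>
      Submodule.coe_equivMapOfInjective_apply (U : H →ₗ[ℂ] H) hUinj' K x
    set A : K ≃ₗᵢ[ℂ] K' :=
      { toLinearEquiv := eKK'
        norm_map' := fun x => by
          rw [show ‖eKK' x‖ = ‖((eKK' x : H))‖ from rfl, heapp, hU]; rfl } with hA
    haveI sep1 : TopologicalSpace.SeparableSpace (Kᗮ : Submodule ℂ H) := inferInstance
    haveI sep2 : TopologicalSpace.SeparableSpace (K'ᗮ : Submodule ℂ H) := inferInstance
    haveI com1 : CompleteSpace (Kᗮ : Submodule ℂ H) := K.isClosed_orthogonal.completeSpace_coe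
    haveI com2 : CompleteSpace (K'ᗮ : Submodule ℂ H) := K'.isClosed_orthogonal.completeSpace_coe
    have hrankKK' : finrank ℂ K = finrank ℂ K' := eKK'.finrank_eq
    have hcond : (FiniteDimensional ℂ (Kᗮ : Submodule ℂ H) ↔
        FiniteDimensional ℂ (K'ᗮ : Submodule ℂ H)) ∧
        finrank ℂ (Kᗮ : Submodule ℂ H) = finrank ℂ (K'ᗮ : Submodule ℂ H) := by
      by_cases hHfin : FiniteDimensional ℂ H
      · refine ⟨⟨fun _ => inferInstance, fun _ => inferInstance⟩, ?_⟩
        have h1 := Submodule.finrank_add_finrank_orthogonal K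
        have h2 := Submodule.finrank_add_finrank_orthogonal K'
        omega
      · have hi1 := aux_orth_infinite K hKfd hHfin
        have hi2 := aux_orth_infinite K' hK'fd hHfin
        refine ⟨iff_of_false hi1 hi2, ?_⟩
        rw [Module.finrank_of_infinite_dimensional hi1,
          Module.finrank_of_infinite_dimensional hi2]
    obtain ⟨B⟩ := aux_isometryEquiv hcond.1 hcond.2
    obtain ⟨V, hVu, hVK, hVn⟩ := aux_glue K K' A B
    refine ⟨V, hVu, ?_, hVn⟩
    intro i hi
    have hmem : d i ∈ K := Submodule.subset_span ⟨i, hi, rfl⟩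
    rw [hVK ⟨d i, hmem⟩]
    exact heapp ⟨d i, hmem⟩
  choose V hVu hVd hVn using hex
  have hViso : ∀ n, ‖V n‖ ≤ 1 := fun n => ContinuousLinearMap.opNorm_le_bound _ zero_le_one
    (fun x => by rw [hVn n x, one_mul])
  have hsot : ∀ x, Tendsto (fun n => V n x) atTop (nhds (U x)) := by
    intro x
    rw [Metric.tendsto_atTop]
    intro ε hε
    obtain ⟨k, hk⟩ := hdr.exists_dist_lt x (show (0:ℝ) < ε/3 by linarith)
    refine ⟨k+1, fun n hn => ?_⟩
    have hdk : V n (d k) = U (d k) := hVd n k (lt_of_lt_of_le (Nat.lt_succ_self k) hn)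
    have h1 : ‖x - d k‖ < ε/3 := by rw [← dist_eq_norm]; exact hk
    have h2 : ‖d k - x‖ < ε/3 := by rw [norm_sub_rev]; exact h1
    calc dist (V n x) (U x) ≤ dist (V n x) (V n (d k)) + dist (V n (d k)) (U x) :=
          dist_triangle _ _ _
      _ = ‖V n (x - d k)‖ + ‖U (d k - x)‖ := by
          rw [dist_eq_norm, dist_eq_norm, ← map_sub, hdk, ← map_sub]
      _ = ‖x - d k‖ + ‖d k - x‖ := by rw [hVn, hU]
      _ < ε := by linarith
  refine ⟨V, hVu, hsot, ?_⟩
  intro A hA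
  have h1 := aux_sot_compact hViso hUnorm hsot hA
  have h2 := aux_sot_compact hViso hUnorm hsot (aux_adjoint_compact A hA)
  rw [tendsto_iff_norm_sub_tendsto_zero]
  have hbound : ∀ n, ‖V n * A * star (V n) - U * A * ContinuousLinearMap.adjoint U‖
      ≤ ‖(V n - U).comp A‖ + ‖(V n - U).comp (ContinuousLinearMap.adjoint A)‖ := by
    intro n
    have hstar : star (V n) = ContinuousLinearMap.adjoint (V n) :=
      ContinuousLinearMap.star_eq_adjoint _
    have hid : V n * A * star (V n) - U * A * ContinuousLinearMap.adjoint U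
        = ((V n - U) * A) * star (V n)
          + U * (A * star (V n) - A * ContinuousLinearMap.adjoint U) := by
      noncomm_ring
    have hadj : ContinuousLinearMap.adjoint ((V n - U).comp (ContinuousLinearMap.adjoint A))
        = A * star (V n) - A * ContinuousLinearMap.adjoint U := by
      rw [ContinuousLinearMap.adjoint_comp, ContinuousLinearMap.adjoint_adjoint, map_sub, hstar]
      rw [ContinuousLinearMap.comp_sub]
      rfl
    have e2 : ‖A * star (V n) - A * ContinuousLinearMap.adjoint U‖
        = ‖(V n - U).comp (ContinuousLinearMap.adjoint A)‖ := by
      rw [← hadj]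
      exact LinearIsometryEquiv.norm_map ContinuousLinearMap.adjoint _
    rw [hid]
    calc ‖((V n - U) * A) * star (V n)
          + U * (A * star (V n) - A * ContinuousLinearMap.adjoint U)‖
        ≤ ‖((V n - U) * A) * star (V n)‖
          + ‖U * (A * star (V n) - A * ContinuousLinearMap.adjoint U)‖ := norm_add_le _ _
      _ ≤ ‖(V n - U) * A‖ * ‖star (V n)‖
          + ‖U‖ * ‖A * star (V n) - A * ContinuousLinearMap.adjoint U‖ :=
            add_le_add (norm_mul_le _ _) (norm_mul_le _ _)
      _ ≤ ‖(V n - U) * A‖ * 1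
          + 1 * ‖A * star (V n) - A * ContinuousLinearMap.adjoint U‖ := by
            apply add_le_add
            · apply mul_le_mul_of_nonneg_left _ (norm_nonneg _)
              rw [norm_star]; exact hViso n
            · apply mul_le_mul_of_nonneg_right hUnorm (norm_nonneg _)
      _ = ‖(V n - U) * A‖ + ‖A * star (V n) - A * ContinuousLinearMap.adjoint U‖ := by ring
      _ = ‖(V n - U).comp A‖ + ‖(V n - U).comp (ContinuousLinearMap.adjoint A)‖ := by
            rw [e2]; rfl
  have hg : Tendsto (fun n => ‖(V n - U).comp A‖
      + ‖(V n - U).comp (ContinuousLinearMap.adjoint A)‖) atTop (nhds 0) := by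
    have := h1.add h2
    simpa using this
  exact squeeze_zero (fun n => norm_nonneg _) hbound hg
end

section
/- For any linear isometry U on a Hilbert space H and any finite-dimensional subspace M ⊂ H, there exists a unitary operator V on H such that V x = U x for all x ∈ M. -/
open scoped ComplexOrder

theorem stmt13 {H : Type*} [NormedAddCommGroup H] [InnerProductSpace ℂ H] [CompleteSpace H]
    (U : H →L[ℂ] H) (hU : ∀ x, ‖U x‖ = ‖x‖)
    (M : Submodule ℂ H) (hM : FiniteDimensional ℂ M) :
    ∃ V : H →L[ℂ] H, V ∈ unitary (H →L[ℂ] H) ∧ ∀ x ∈ M, V x = U x := by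
  classical
  -- N = M ⊔ U(M), a finite-dimensional subspace
  set N : Submodule ℂ H := M ⊔ M.map (U : H →ₗ[ℂ] H) with hN
  haveI : FiniteDimensional ℂ (M.map (U : H →ₗ[ℂ] H)) := Module.Finite.map M (U : H →ₗ[ℂ] H)
  haveI hNfd : FiniteDimensional ℂ N := Submodule.finiteDimensional_sup M _
  haveI : CompleteSpace N := FiniteDimensional.complete ℂ N
  have hMN : M ≤ N := le_sup_left
  -- S = M viewed as a subspace of N
  set S : Submodule ℂ N := M.comap N.subtype with hS
  have hUmem : ∀ s : S, U ((s : N) : H) ∈ N := by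
    intro s
    have hsM : ((s : N) : H) ∈ M := s.2
    exact Submodule.mem_sup_right (Submodule.mem_map_of_mem hsM)
  -- the isometry S → N induced by U
  let f : S →ₗ[ℂ] N :=
    LinearMap.codRestrict N ((U : H →ₗ[ℂ] H).comp (N.subtype.comp S.subtype)) hUmem
  let L : S →ₗᵢ[ℂ] N :=
    { toLinearMap := f
      norm_map' := by
        intro s
        have h1 : ‖f s‖ = ‖U (((s : N)) : H)‖ := rfl
        have h2 : ‖s‖ = ‖(((s : N)) : H)‖ := rfl
        rw [h1, h2, hU] }
  -- extend to an isometry of N, which is bijective by finite dimensionality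
  let W : N →ₗᵢ[ℂ] N := L.extend
  have hWsurj : Function.Surjective W :=
    LinearMap.surjective_of_injective W.injective
  let We : N ≃ₗᵢ[ℂ] N := LinearIsometryEquiv.ofSurjective W hWsurj
  have hWe : ∀ n : N, We n = W n := fun n => by
    simp [We, LinearIsometryEquiv.coe_ofSurjective]
  -- the global map: We on N, identity on Nᗮ
  let g : H →ₗ[ℂ] H :=
    N.subtype ∘ₗ (We.toLinearEquiv : N →ₗ[ℂ] N) ∘ₗ (Submodule.orthogonalProjectionOnto N : H →L[ℂ] N)
      + Nᗮ.subtype ∘ₗ (Submodule.orthogonalProjectionOnto Nᗮ : H →L[ℂ] Nᗮ)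
  have hg : ∀ x : H, g x = (We (Submodule.orthogonalProjectionOnto N x) : H) + (Submodule.orthogonalProjectionOnto Nᗮ x : H) :=
    fun x => rfl
  have hgnorm : ∀ x : H, ‖g x‖ = ‖x‖ := by
    intro x
    have horth : (inner ℂ ((We (Submodule.orthogonalProjectionOnto N x) : N) : H)
        (((Submodule.orthogonalProjectionOnto Nᗮ x : Nᗮ)) : H) : ℂ) = 0 :=
      Submodule.inner_right_of_mem_orthogonal (We (Submodule.orthogonalProjectionOnto N x)).2
        (Submodule.orthogonalProjectionOnto Nᗮ x).2
    rw [← sq_eq_sq₀ (norm_nonneg _) (norm_nonneg _), Submodule.norm_sq_eq_add_norm_sq_projection x N]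
    rw [hg, sq, norm_add_sq_eq_norm_sq_add_norm_sq_of_inner_eq_zero _ _ horth]
    rw [← Submodule.coe_norm, ← Submodule.coe_norm, We.norm_map]
    ring
  let G : H →ₗᵢ[ℂ] H := { toLinearMap := g, norm_map' := hgnorm }
  -- surjectivity of G
  have hGsurj : Function.Surjective G := by
    intro y
    refine ⟨(We.symm (Submodule.orthogonalProjectionOnto N y) : H) + (Submodule.orthogonalProjectionOnto Nᗮ y : H), ?_⟩
    have h1 : Submodule.orthogonalProjectionOnto N ((We.symm (Submodule.orthogonalProjectionOnto N y) : H)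
        + (Submodule.orthogonalProjectionOnto Nᗮ y : H)) = We.symm (Submodule.orthogonalProjectionOnto N y) := by
      rw [map_add, Submodule.orthogonalProjectionOnto_mem_subspace_eq_self,
        Submodule.orthogonalProjectionOnto_apply_of_mem_orthogonal
          (Submodule.orthogonalProjectionOnto Nᗮ y).2, add_zero]
    have h2 : Submodule.orthogonalProjectionOnto Nᗮ ((We.symm (Submodule.orthogonalProjectionOnto N y) : H)
        + (Submodule.orthogonalProjectionOnto Nᗮ y : H)) = Submodule.orthogonalProjectionOnto Nᗮ y := by
      rw [map_add, Submodule.orthogonalProjectionOnto_mem_subspace_eq_self,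
        Submodule.orthogonalProjectionOnto_apply_of_mem_orthogonal
          (Submodule.le_orthogonal_orthogonal N (We.symm (Submodule.orthogonalProjectionOnto N y)).2), zero_add]
    show g _ = y
    rw [hg, h1, h2, LinearIsometryEquiv.apply_symm_apply]
    exact (Submodule.starProjection_add_starProjection_orthogonal (K := N) y)
  let E : H ≃ₗᵢ[ℂ] H := LinearIsometryEquiv.ofSurjective G hGsurj
  refine ⟨(E : H →L[ℂ] H), ?_, ?_⟩
  · have := (Unitary.linearIsometryEquiv (𝕜 := ℂ) (H := H)).symm E
    have h := Unitary.coe_symm_linearIsometryEquiv_apply (𝕜 := ℂ) (H := H) E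
    rw [← h]
    exact ((Unitary.linearIsometryEquiv).symm E).2
  · intro x hx
    have hxN : x ∈ N := hMN hx
    have hEx : E x = g x := rfl
    have hproj : Submodule.orthogonalProjectionOnto N x = ⟨x, hxN⟩ :=
      Subtype.ext ((Submodule.starProjection_eq_self_iff (K := N)).mpr hxN)
    have hproj' : Submodule.orthogonalProjectionOnto Nᗮ x = 0 :=
      Submodule.orthogonalProjectionOnto_apply_of_mem_orthogonal
        (Submodule.le_orthogonal_orthogonal N hxN)
    have hsS : (⟨x, hxN⟩ : N) ∈ S := hx
    have hWx : W (⟨x, hxN⟩ : N) = L (⟨⟨x, hxN⟩, hsS⟩ : S) :=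
      L.extend_apply ⟨⟨x, hxN⟩, hsS⟩
    show (E : H →L[ℂ] H) x = U x
    have : (E : H →L[ℂ] H) x = g x := rfl
    rw [this, hg, hproj, hproj', hWe, hWx]
    simp
    rfl
end

section
/- On a separable infinite-dimensional Hilbert space H, there exists an uncountable family of infinite-rank orthogonal projections such that the product of any two distinct members has finite rank. -/
open scoped ComplexOrder

section Aux

variable {H : Type*} [NormedAddCommGroup H] [InnerProductSpace ℂ H] [CompleteSpace H]

/-- closed span of an orthonormal subfamily -/
noncomputable def Kc (e : ℕ → H) (A : Set ℕ) : Submodule ℂ H :=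
  (Submodule.span ℂ (e '' A)).topologicalClosure

instance Kc.completeSpace (e : ℕ → H) (A : Set ℕ) : CompleteSpace (Kc e A) :=
  (Submodule.isClosed_topologicalClosure _).completeSpace_coe

/-- the orthogonal projection onto `Kc e A`, as an endomorphism of `H` -/
noncomputable def Pc (e : ℕ → H) (A : Set ℕ) : H →L[ℂ] H :=
  (Kc e A).subtypeL ∘L (Kc e A).orthogonalProjectionOnto

lemma Pc_apply (e : ℕ → H) (A : Set ℕ) (x : H) :
    Pc e A x = ((Kc e A).orthogonalProjectionOnto x : H) := rfl

lemma mem_Kc (e : ℕ → H) {A : Set ℕ} {j : ℕ} (hj : j ∈ A) : e j ∈ Kc e A :=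
  (Submodule.span ℂ (e '' A)).le_topologicalClosure
    (Submodule.subset_span ⟨j, hj, rfl⟩)

lemma Kc_orthogonal (e : ℕ → H) : (Kc e A)ᗮ = (Submodule.span ℂ (e '' A))ᗮ := by
  rw [Kc, ← Submodule.orthogonal_orthogonal_eq_closure,
    Submodule.triorthogonal_eq_orthogonal]

lemma mem_Kc_orth {e : ℕ → H} (he : Orthonormal ℂ e) {A : Set ℕ} {j : ℕ} (hj : j ∉ A) :
    e j ∈ (Kc e A)ᗮ := by
  rw [Kc_orthogonal, Submodule.mem_orthogonal]
  intro u hu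
  induction hu using Submodule.span_induction with
  | mem u hu =>
    obtain ⟨i, hi, rfl⟩ := hu
    exact he.2 (fun h : i = j => hj (h ▸ hi))
  | zero => simp
  | add u v _ _ hu hv => simp [inner_add_left, hu, hv]
  | smul c u _ hu => simp [inner_smul_left, hu]

lemma Pc_apply_mem (e : ℕ → H) {A : Set ℕ} {j : ℕ} (hj : j ∈ A) :
    Pc e A (e j) = e j := by
  rw [show Pc e A = (Kc e A).starProjection from rfl, Submodule.starProjection_eq_self_iff]
  exact mem_Kc e hj

lemma Pc_apply_not_mem {e : ℕ → H} (he : Orthonormal ℂ e) {A : Set ℕ} {j : ℕ} (hj : j ∉ A) :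
    Pc e A (e j) = 0 := by
  rw [Pc_apply]
  rw [Submodule.orthogonalProjectionOnto_apply_of_mem_orthogonal (mem_Kc_orth he hj)]
  simp

lemma Pc_selfAdjoint (e : ℕ → H) (A : Set ℕ) : IsSelfAdjoint (Pc e A) :=
  isSelfAdjoint_starProjection _

lemma Pc_idem (e : ℕ → H) (A : Set ℕ) : Pc e A * Pc e A = Pc e A := by
  ext x
  show Pc e A (Pc e A x) = Pc e A x
  rw [Pc_apply (x := Pc e A x)]; exact (Submodule.starProjection_eq_self_iff (K := Kc e A)).2 (by
    rw [Pc_apply]; exact ((Kc e A).orthogonalProjectionOnto x).2)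

lemma range_Pc (e : ℕ → H) (A : Set ℕ) : LinearMap.range (Pc e A : H →ₗ[ℂ] H) = Kc e A := by
  apply le_antisymm
  · rintro _ ⟨x, rfl⟩
    rw [ContinuousLinearMap.coe_coe, Pc_apply]
    exact ((Kc e A).orthogonalProjectionOnto x).2
  · intro x hx
    exact ⟨x, (Submodule.starProjection_eq_self_iff (K := Kc e A)).2 hx⟩

lemma Kc_not_finiteDimensional {e : ℕ → H} (he : Orthonormal ℂ e) {A : Set ℕ}
    (hA : A.Infinite) : ¬ FiniteDimensional ℂ (Kc e A) := by
  intro hfd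
  have hf : ∀ j : A, e j ∈ Kc e A := fun j => mem_Kc e j.2
  set f : A → Kc e A := fun j => ⟨e j, hf j⟩ with hfdef
  have hon : Orthonormal ℂ f := by
    constructor
    · intro i
      have := he.1 i
      simpa [hfdef, Submodule.norm_coe] using this
    · intro i j hij
      have : (i : ℕ) ≠ (j : ℕ) := fun h => hij (Subtype.ext h)
      have := he.2 this
      simpa [hfdef, Submodule.coe_inner] using this
  have hli := hon.linearIndependent
  have := hli.lt_aleph0_of_finiteDimensional
  have : Infinite A := hA.to_subtype
  exact absurd ‹Cardinal.mk A < Cardinal.aleph0› (not_lt.2 (Cardinal.aleph0_le_mk A))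

lemma range_Pc_mul {e : ℕ → H} (he : Orthonormal ℂ e) {A B : Set ℕ}
    (hAB : (A ∩ B).Finite) :
    FiniteDimensional ℂ (LinearMap.range ((Pc e A * Pc e B : H →L[ℂ] H) : H →ₗ[ℂ] H)) := by
  set S : Submodule ℂ H := Submodule.span ℂ (e '' (A ∩ B)) with hS
  have hSfd : FiniteDimensional ℂ S := FiniteDimensional.span_of_finite ℂ (hAB.image e)
  have hle : LinearMap.range ((Pc e A * Pc e B : H →L[ℂ] H) : H →ₗ[ℂ] H) ≤ S := by
    rintro _ ⟨x, rfl⟩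
    show Pc e A (Pc e B x) ∈ S
    have hx : Pc e B x ∈ Kc e B := by
      rw [Pc_apply]; exact ((Kc e B).orthogonalProjectionOnto x).2
    -- image of the closed span under `Pc e A` lands in closure of image of span
    have hmap : (Kc e B).map (Pc e A : H →ₗ[ℂ] H) ≤
        ((Submodule.span ℂ (e '' B)).map (Pc e A : H →ₗ[ℂ] H)).topologicalClosure := by
      rw [Kc]
      exact Submodule.topologicalClosure_map (Pc e A) (Submodule.span ℂ (e '' B))
    have hspan : (Submodule.span ℂ (e '' B)).map (Pc e A : H →ₗ[ℂ] H) ≤ S := by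
      rw [Submodule.map_span, Submodule.span_le]
      rintro _ ⟨_, ⟨j, hj, rfl⟩, rfl⟩
      by_cases hjA : j ∈ A
      · show Pc e A (e j) ∈ (S : Set H)
        rw [Pc_apply_mem e hjA]
        exact Submodule.subset_span ⟨j, ⟨hjA, hj⟩, rfl⟩
      · show Pc e A (e j) ∈ (S : Set H)
        rw [Pc_apply_not_mem he hjA]
        exact S.zero_mem
    have hScl : S.topologicalClosure = S :=
      SetLike.coe_injective (Submodule.closed_of_finiteDimensional S).closure_eq
    have : (Kc e B).map (Pc e A : H →ₗ[ℂ] H) ≤ S := by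
      refine hmap.trans ?_
      rw [← hScl]
      exact Submodule.topologicalClosure_mono hspan
    exact this ⟨Pc e B x, hx, rfl⟩
  exact Submodule.finiteDimensional_of_le hle

end Aux

/-! ### An almost disjoint family of infinite subsets of `ℕ` -/

/-- encodings of the finite prefixes of a boolean sequence -/
noncomputable def preEnc (x : ℕ → Bool) (n : ℕ) : ℕ :=
  Encodable.encode (List.ofFn fun i : Fin n => x i)

noncomputable def Aset (x : ℕ → Bool) : Set ℕ := Set.range (preEnc x)

lemma preEnc_eq_iff {x y : ℕ → Bool} {n m : ℕ} (h : preEnc x n = preEnc y m) :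
    n = m ∧ ∀ i < n, x i = y i := by
  have hl : (List.ofFn fun i : Fin n => x i) = (List.ofFn fun i : Fin m => y i) :=
    Encodable.encode_injective h
  have hnm : n = m := by
    have := congrArg List.length hl
    simpa using this
  subst hnm
  refine ⟨rfl, fun i hi => ?_⟩
  have := congrArg (fun l => l[0]?) hl
  have h2 : (fun j : Fin n => x j) = fun j : Fin n => y j := List.ofFn_injective hl
  exact congrFun h2 ⟨i, hi⟩

lemma preEnc_injective (x : ℕ → Bool) : Function.Injective (preEnc x) :=
  fun n m h => (preEnc_eq_iff h).1

lemma Aset_infinite (x : ℕ → Bool) : (Aset x).Infinite :=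
  Set.infinite_range_of_injective (preEnc_injective x)

lemma Aset_almost_disjoint {x y : ℕ → Bool} (hxy : x ≠ y) :
    (Aset x ∩ Aset y).Finite := by
  obtain ⟨k, hk⟩ : ∃ k, x k ≠ y k := by
    by_contra h
    push_neg at h
    exact hxy (funext h)
  have hsub : Aset x ∩ Aset y ⊆ preEnc x '' (Set.Iic k) := by
    rintro z ⟨⟨n, rfl⟩, ⟨m, hm⟩⟩
    obtain ⟨hnm, hpre⟩ := preEnc_eq_iff hm.symm
    refine ⟨n, ?_, rfl⟩
    simp only [Set.mem_Iic]
    by_contra hn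
    push_neg at hn
    exact hk (hpre k hn)
  exact ((Set.finite_Iic k).image _).subset hsub

lemma Aset_injective : Function.Injective Aset := by
  intro x y h
  funext n
  have hmem : preEnc x (n + 1) ∈ Aset y := h ▸ ⟨n + 1, rfl⟩
  obtain ⟨m, hm⟩ := hmem
  obtain ⟨hnm, hpre⟩ := preEnc_eq_iff hm
  subst hnm
  exact (hpre n (Nat.lt_succ_self n)).symm

lemma uncountable_boolSeq : Uncountable (ℕ → Bool) := by
  classical
  have hinj : Function.Injective (fun s : Set ℕ => fun n => decide (n ∈ s)) := by
    intro s t h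
    ext n
    have := congrFun h n
    simp only [decide_eq_decide] at this
    exact this
  have hSet : Uncountable (Set ℕ) := by
    constructor
    intro hc
    obtain ⟨f, hf⟩ := Countable.exists_injective_nat (Set ℕ)
    exact Function.cantor_injective f hf
  exact hinj.uncountable

theorem stmt16 {H : Type*} [NormedAddCommGroup H] [InnerProductSpace ℂ H] [CompleteSpace H]
    [TopologicalSpace.SeparableSpace H] (hinf : ¬ FiniteDimensional ℂ H) :
    ∃ Ps : Set (H →L[ℂ] H), ¬ Ps.Countable ∧
      (∀ P ∈ Ps, IsSelfAdjoint P ∧ P * P = P ∧ ¬ FiniteDimensional ℂ (LinearMap.range (P : H →ₗ[ℂ] H))) ∧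
      (∀ P ∈ Ps, ∀ Q ∈ Ps, P ≠ Q → FiniteDimensional ℂ (LinearMap.range ((P * Q : H →L[ℂ] H) : H →ₗ[ℂ] H))) := by
  classical
  -- get an infinite orthonormal family indexed by ℕ
  obtain ⟨w, b, hb⟩ := exists_hilbertBasis ℂ H
  have hwinf : w.Infinite := by
    by_contra hnotinf
    rw [Set.not_infinite] at hnotinf
    have hwfin := hnotinf
    apply hinf
    have hdense : (Submodule.span ℂ (Set.range (b : w → H))).topologicalClosure = ⊤ :=
      b.dense_span
    have hrange : Set.range (b : w → H) = w := by rw [hb, Subtype.range_coe]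
    rw [hrange] at hdense
    have hfd : FiniteDimensional ℂ (Submodule.span ℂ (w : Set H)) :=
      FiniteDimensional.span_of_finite ℂ hwfin
    have hclosed : IsClosed ((Submodule.span ℂ (w : Set H)) : Set H) :=
      Submodule.closed_of_finiteDimensional _
    have htop : Submodule.span ℂ (w : Set H) = ⊤ := by
      rw [← hdense]
      exact (SetLike.coe_injective hclosed.closure_eq).symm
    have : FiniteDimensional ℂ (⊤ : Submodule ℂ H) := htop ▸ hfd
    exact (Submodule.topEquiv (R := ℂ) (M := H)).finiteDimensional
  have hemb : ℕ ↪ w := hwinf.natEmbedding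
  set e : ℕ → H := fun n => b (hemb n) with he_def
  have he : Orthonormal ℂ e := b.orthonormal.comp _ hemb.injective
  have henz : ∀ n, e n ≠ 0 := fun n h => by
    have := he.1 n
    rw [h, norm_zero] at this
    norm_num at this
  -- the family
  refine ⟨Set.range (fun x : ℕ → Bool => Pc e (Aset x)), ?_, ?_, ?_⟩
  · -- uncountable
    intro hc
    have hPinj : Function.Injective (fun x : ℕ → Bool => Pc e (Aset x)) := by
      intro x y h
      apply Aset_injective
      have hsub : ∀ (u v : ℕ → Bool), Pc e (Aset u) = Pc e (Aset v) → Aset u ⊆ Aset v := by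
        intro u v huv j hj
        by_contra hjv
        have h1 : Pc e (Aset u) (e j) = e j := Pc_apply_mem e hj
        have h2 : Pc e (Aset v) (e j) = 0 := Pc_apply_not_mem he hjv
        rw [huv, h2] at h1
        exact henz j h1.symm
      exact le_antisymm (hsub x y h) (hsub y x h.symm)
    haveI := hc.to_subtype
    have : Countable (ℕ → Bool) :=
      (Function.Injective.countable
        (f := fun x : ℕ → Bool =>
          (⟨Pc e (Aset x), ⟨x, rfl⟩⟩ : Set.range (fun x : ℕ → Bool => Pc e (Aset x))))
        (fun a b hab => hPinj (congrArg Subtype.val hab)))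
    exact (uncountable_boolSeq.not_countable) this
  · -- each member is an infinite-rank projection
    rintro P ⟨x, rfl⟩
    refine ⟨Pc_selfAdjoint e (Aset x), Pc_idem e (Aset x), ?_⟩
    rw [range_Pc]
    exact Kc_not_finiteDimensional he (Aset_infinite x)
  · -- pairwise products have finite rank
    rintro P ⟨x, rfl⟩ Q ⟨y, rfl⟩ hPQ
    have hxy : x ≠ y := fun h => hPQ (by rw [h])
    exact range_Pc_mul he (Aset_almost_disjoint hxy)
end

section
/- Let H be infinite-dimensional and let V be a non-surjective linear isometry on H and L a linear (possibly unbounded, everywhere-defined) operator whose range is orthogonal to the range of V. Then the map on finite-rank operators sending Σᵢ xᵢ ⊗ yᵢ to Σᵢ (V xᵢ) ⊗ ((V + L) yᵢ) is a well-defined multiplicative (algebra-endomorphism) map on F(H) that preserves rank. -/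
open scoped ComplexOrder

noncomputable section

open ContinuousLinearMap

namespace Stmt19Aux

variable {H : Type*} [NormedAddCommGroup H] [InnerProductSpace ℂ H] [CompleteSpace H]

/-- The continuous version of `L ∘ adjoint A` when `A` has finite rank. -/
noncomputable def Cmap (L : H →ₗ[ℂ] H) (A : H →L[ℂ] H)
    (h : FiniteDimensional ℂ (LinearMap.range (A : H →ₗ[ℂ] H))) : H →L[ℂ] H :=
  haveI := h
  haveI : CompleteSpace (LinearMap.range (A : H →ₗ[ℂ] H)) := FiniteDimensional.complete ℂ _
  (LinearMap.toContinuousLinearMap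
      (L ∘ₗ ((ContinuousLinearMap.adjoint A : H →ₗ[ℂ] H) ∘ₗ (LinearMap.range (A : H →ₗ[ℂ] H)).subtype))).comp
    (Submodule.orthogonalProjectionOnto (LinearMap.range (A : H →ₗ[ℂ] H)))

lemma adjoint_apply_eq_zero_of_mem_orthogonal (A : H →L[ℂ] H) {w : H}
    (hw : w ∈ (LinearMap.range (A : H →ₗ[ℂ] H))ᗮ) : ContinuousLinearMap.adjoint A w = 0 := by
  apply ext_inner_right ℂ
  intro z
  rw [adjoint_inner_left, inner_zero_left]
  have : (inner ℂ (A z) w : ℂ) = 0 := hw (A z) ⟨z, rfl⟩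
  rw [← inner_conj_symm, this, map_zero]

lemma Cmap_apply (L : H →ₗ[ℂ] H) (A : H →L[ℂ] H)
    (h : FiniteDimensional ℂ (LinearMap.range (A : H →ₗ[ℂ] H))) (u : H) :
    Cmap L A h u = L (ContinuousLinearMap.adjoint A u) := by
  haveI := h
  haveI : CompleteSpace (LinearMap.range (A : H →ₗ[ℂ] H)) := FiniteDimensional.complete ℂ _
  show L (ContinuousLinearMap.adjoint A ((LinearMap.range (A : H →ₗ[ℂ] H)).subtype
      (Submodule.orthogonalProjectionOnto (LinearMap.range (A : H →ₗ[ℂ] H)) u))) = L (ContinuousLinearMap.adjoint A u)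
  congr 1
  have hmem : u - (Submodule.orthogonalProjectionOnto (LinearMap.range (A : H →ₗ[ℂ] H)) u : H) ∈ (LinearMap.range (A : H →ₗ[ℂ] H))ᗮ :=
    Submodule.sub_starProjection_mem_orthogonal (K := LinearMap.range (A : H →ₗ[ℂ] H)) u
  have := adjoint_apply_eq_zero_of_mem_orthogonal A hmem
  rw [map_sub] at this
  have h2 := sub_eq_zero.mp this
  exact h2.symm


/-- `Bmap` is the second piece of `Phi`. -/
noncomputable def Bmap (L : H →ₗ[ℂ] H) (A : H →L[ℂ] H)
    (h : FiniteDimensional ℂ (LinearMap.range (A : H →ₗ[ℂ] H))) : H →L[ℂ] H :=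
  ContinuousLinearMap.adjoint (Cmap L A h)

lemma Bmap_inner (L : H →ₗ[ℂ] H) (A : H →L[ℂ] H)
    (h : FiniteDimensional ℂ (LinearMap.range (A : H →ₗ[ℂ] H))) (z u : H) :
    (inner ℂ (Bmap L A h z) u : ℂ) = inner ℂ z (L (ContinuousLinearMap.adjoint A u)) := by
  rw [Bmap, adjoint_inner_left, Cmap_apply]

variable (V : H →L[ℂ] H)

lemma adjV_V (hViso : ∀ x, ‖V x‖ = ‖x‖) (w : H) :
    ContinuousLinearMap.adjoint V (V w) = w := by
  have li : H →ₗᵢ[ℂ] H := ⟨V.toLinearMap, hViso⟩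
  apply ext_inner_right ℂ
  intro y
  rw [adjoint_inner_left]
  exact (⟨V.toLinearMap, hViso⟩ : H →ₗᵢ[ℂ] H).inner_map_map w y

lemma Bmap_comp_V (L : H →ₗ[ℂ] H) (hL : ∀ x y : H, (inner ℂ (V y) (L x) : ℂ) = 0)
    (A : H →L[ℂ] H) (h : FiniteDimensional ℂ (LinearMap.range (A : H →ₗ[ℂ] H))) (w : H) :
    Bmap L A h (V w) = 0 := by
  apply ext_inner_right ℂ
  intro u
  rw [Bmap_inner, inner_zero_left]
  exact hL _ _

lemma Bmap_mem_range (L : H →ₗ[ℂ] H) (A : H →L[ℂ] H)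
    (h : FiniteDimensional ℂ (LinearMap.range (A : H →ₗ[ℂ] H))) (z : H) :
    Bmap L A h z ∈ LinearMap.range (A : H →ₗ[ℂ] H) := by
  haveI := h
  haveI : CompleteSpace (LinearMap.range (A : H →ₗ[ℂ] H)) := FiniteDimensional.complete ℂ _
  rw [← (LinearMap.range (A : H →ₗ[ℂ] H)).orthogonal_orthogonal]
  intro w hw
  rw [← inner_conj_symm, Bmap_inner, adjoint_apply_eq_zero_of_mem_orthogonal A hw,
    map_zero, inner_zero_right, map_zero]

open Classical in
/-- The map `Phi`. -/
noncomputable def PhiMap (L : H →ₗ[ℂ] H) (A : H →L[ℂ] H) : H →L[ℂ] H :=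
  if h : FiniteDimensional ℂ (LinearMap.range (A : H →ₗ[ℂ] H)) then
    V.comp (A.comp (ContinuousLinearMap.adjoint V) + Bmap L A h)
  else 0

lemma PhiMap_eq (L : H →ₗ[ℂ] H) (A : H →L[ℂ] H) (h : FiniteDimensional ℂ (LinearMap.range (A : H →ₗ[ℂ] H))) :
    PhiMap V L A = V.comp (A.comp (ContinuousLinearMap.adjoint V) + Bmap L A h) :=
  dif_pos h

lemma rankOne_apply (x y z : H) : rankOne x y z = (inner ℂ y z : ℂ) • x := rfl

lemma adjoint_rankOne (x y : H) :
    ContinuousLinearMap.adjoint (rankOne x y) = rankOne y x := by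
  ext z
  apply ext_inner_right ℂ
  intro u
  rw [adjoint_inner_left, rankOne_apply, rankOne_apply, inner_smul_left, inner_smul_right]
  rw [inner_conj_symm]
  ring

lemma finrank_range_sum_rankOne (n : ℕ) (x y : Fin n → H) :
    FiniteDimensional ℂ (LinearMap.range (↑(∑ i, rankOne (x i) (y i)) : H →ₗ[ℂ] H)) := by
  have hle : LinearMap.range (↑(∑ i, rankOne (x i) (y i)) : H →ₗ[ℂ] H) ≤ Submodule.span ℂ (Set.range x) := by
    rintro _ ⟨z, rfl⟩
    rw [ContinuousLinearMap.coe_coe, ContinuousLinearMap.sum_apply]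
    apply Submodule.sum_mem
    intro i _
    rw [rankOne_apply]
    exact Submodule.smul_mem _ _ (Submodule.subset_span ⟨i, rfl⟩)
  haveI : FiniteDimensional ℂ (Submodule.span ℂ (Set.range x)) :=
    FiniteDimensional.span_of_finite ℂ (Set.finite_range x)
  exact Submodule.finiteDimensional_of_le hle


lemma range_mul_le (A B : H →L[ℂ] H) :
    LinearMap.range (↑(A * B) : H →ₗ[ℂ] H) ≤ LinearMap.range (A : H →ₗ[ℂ] H) := by
  rintro _ ⟨z, rfl⟩
  exact ⟨B z, by simp [ContinuousLinearMap.mul_apply]⟩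

lemma range_add_fd (A B : H →L[ℂ] H) (hA : FiniteDimensional ℂ (LinearMap.range (A : H →ₗ[ℂ] H)))
    (hB : FiniteDimensional ℂ (LinearMap.range (B : H →ₗ[ℂ] H))) :
    FiniteDimensional ℂ (LinearMap.range (↑(A + B) : H →ₗ[ℂ] H)) := by
  haveI := hA; haveI := hB
  have hle : LinearMap.range (↑(A + B) : H →ₗ[ℂ] H) ≤ LinearMap.range (A : H →ₗ[ℂ] H) ⊔ LinearMap.range (B : H →ₗ[ℂ] H) := by
    rintro _ ⟨z, rfl⟩
    exact Submodule.add_mem_sup ⟨z, rfl⟩ ⟨z, rfl⟩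
  exact Submodule.finiteDimensional_of_le hle

lemma Cmap_add (L : H →ₗ[ℂ] H) (A B : H →L[ℂ] H)
    (hA : FiniteDimensional ℂ (LinearMap.range (A : H →ₗ[ℂ] H)))
    (hB : FiniteDimensional ℂ (LinearMap.range (B : H →ₗ[ℂ] H)))
    (hAB : FiniteDimensional ℂ (LinearMap.range (↑(A + B) : H →ₗ[ℂ] H))) :
    Cmap L (A + B) hAB = Cmap L A hA + Cmap L B hB := by
  ext u
  simp [Cmap_apply, map_add]

lemma Bmap_add (L : H →ₗ[ℂ] H) (A B : H →L[ℂ] H)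
    (hA : FiniteDimensional ℂ (LinearMap.range (A : H →ₗ[ℂ] H)))
    (hB : FiniteDimensional ℂ (LinearMap.range (B : H →ₗ[ℂ] H)))
    (hAB : FiniteDimensional ℂ (LinearMap.range (↑(A + B) : H →ₗ[ℂ] H))) :
    Bmap L (A + B) hAB = Bmap L A hA + Bmap L B hB := by
  rw [Bmap, Bmap, Bmap, Cmap_add L A B hA hB hAB, map_add]

lemma Cmap_mul (L : H →ₗ[ℂ] H) (A B : H →L[ℂ] H)
    (hB : FiniteDimensional ℂ (LinearMap.range (B : H →ₗ[ℂ] H)))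
    (hAB : FiniteDimensional ℂ (LinearMap.range (↑(A * B) : H →ₗ[ℂ] H))) :
    Cmap L (A * B) hAB = (Cmap L B hB).comp (ContinuousLinearMap.adjoint A) := by
  ext u
  simp only [Cmap_apply, comp_apply, mul_def, adjoint_comp]

lemma Bmap_mul (L : H →ₗ[ℂ] H) (A B : H →L[ℂ] H)
    (hB : FiniteDimensional ℂ (LinearMap.range (B : H →ₗ[ℂ] H)))
    (hAB : FiniteDimensional ℂ (LinearMap.range (↑(A * B) : H →ₗ[ℂ] H))) :
    Bmap L (A * B) hAB = A.comp (Bmap L B hB) := by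
  rw [Bmap, Bmap, Cmap_mul L A B hB hAB, adjoint_comp, adjoint_adjoint]

lemma PhiMap_add (L : H →ₗ[ℂ] H) (A B : H →L[ℂ] H)
    (hA : FiniteDimensional ℂ (LinearMap.range (A : H →ₗ[ℂ] H)))
    (hB : FiniteDimensional ℂ (LinearMap.range (B : H →ₗ[ℂ] H))) :
    PhiMap V L (A + B) = PhiMap V L A + PhiMap V L B := by
  have hAB := range_add_fd A B hA hB
  rw [PhiMap_eq V L _ hAB, PhiMap_eq V L _ hA, PhiMap_eq V L _ hB,
    Bmap_add L A B hA hB hAB]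
  ext z
  simp only [comp_apply, add_apply, map_add]
  abel

lemma PhiMap_mul (hViso : ∀ x, ‖V x‖ = ‖x‖)
    (L : H →ₗ[ℂ] H) (hL : ∀ x y : H, (inner ℂ (V y) (L x) : ℂ) = 0) (A B : H →L[ℂ] H)
    (hA : FiniteDimensional ℂ (LinearMap.range (A : H →ₗ[ℂ] H)))
    (hB : FiniteDimensional ℂ (LinearMap.range (B : H →ₗ[ℂ] H))) :
    PhiMap V L (A * B) = PhiMap V L A * PhiMap V L B := by
  haveI := hA
  have hAB : FiniteDimensional ℂ (LinearMap.range (↑(A * B) : H →ₗ[ℂ] H)) :=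
    Submodule.finiteDimensional_of_le (range_mul_le A B)
  rw [PhiMap_eq V L _ hAB, PhiMap_eq V L _ hA, PhiMap_eq V L _ hB,
    Bmap_mul L A B hB hAB]
  ext z
  simp only [mul_apply, comp_apply, add_apply, mul_def]
  rw [adjV_V V hViso, Bmap_comp_V V L hL, add_zero]
  simp [map_add]

lemma range_PhiMap (hViso : ∀ x, ‖V x‖ = ‖x‖)
    (L : H →ₗ[ℂ] H) (hL : ∀ x y : H, (inner ℂ (V y) (L x) : ℂ) = 0) (A : H →L[ℂ] H)
    (h : FiniteDimensional ℂ (LinearMap.range (A : H →ₗ[ℂ] H))) :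
    LinearMap.range (↑(PhiMap V L A) : H →ₗ[ℂ] H)
      = Submodule.map (V : H →ₗ[ℂ] H) (LinearMap.range (A : H →ₗ[ℂ] H)) := by
  rw [PhiMap_eq V L A h]
  set X := A.comp (ContinuousLinearMap.adjoint V) + Bmap L A h with hX
  have hrX : LinearMap.range (X : H →ₗ[ℂ] H) = LinearMap.range (A : H →ₗ[ℂ] H) := by
    apply le_antisymm
    · rintro _ ⟨z, rfl⟩
      have : X z = A (ContinuousLinearMap.adjoint V z) + Bmap L A h z := rfl
      rw [ContinuousLinearMap.coe_coe, this]
      exact Submodule.add_mem _ ⟨_, rfl⟩ (Bmap_mem_range L A h z)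
    · rintro _ ⟨z, rfl⟩
      refine ⟨V z, ?_⟩
      show A ((ContinuousLinearMap.adjoint V) (V z)) + Bmap L A h (V z) = A z
      rw [adjV_V V hViso, Bmap_comp_V V L hL, add_zero]
  ext u
  constructor
  · rintro ⟨z, rfl⟩
    exact ⟨X z, hrX ▸ ⟨z, rfl⟩, rfl⟩
  · rintro ⟨w, hw, rfl⟩
    rw [← hrX] at hw
    obtain ⟨z, rfl⟩ := hw
    exact ⟨z, rfl⟩

lemma PhiMap_sum (L : H →ₗ[ℂ] H) (n : ℕ) (x y : Fin n → H) :
    PhiMap V L (∑ i, rankOne (x i) (y i))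
      = ∑ i, rankOne (V (x i)) (V (y i) + L (y i)) := by
  have h := finrank_range_sum_rankOne (H := H) n x y
  rw [PhiMap_eq V L _ h]
  have hadj : ContinuousLinearMap.adjoint (∑ i, rankOne (x i) (y i))
      = ∑ i, rankOne (y i) (x i) := by
    rw [map_sum]
    exact Finset.sum_congr rfl fun i _ => adjoint_rankOne _ _
  have hB : ∀ z, Bmap L (∑ i, rankOne (x i) (y i)) h z
      = ∑ i, (inner ℂ (L (y i)) z : ℂ) • x i := by
    intro z
    apply ext_inner_right ℂ
    intro u
    rw [Bmap_inner, hadj]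
    simp only [ContinuousLinearMap.sum_apply, rankOne_apply, map_sum, map_smul,
      inner_sum, sum_inner, inner_smul_left, inner_smul_right, inner_conj_symm]
    exact Finset.sum_congr rfl fun i _ => by ring
  ext z
  simp only [comp_apply, add_apply, ContinuousLinearMap.sum_apply, rankOne_apply, hB,
    map_add, map_sum, map_smul, inner_add_left, add_smul, Finset.sum_add_distrib]
  congr 1
  exact Finset.sum_congr rfl fun i _ => by rw [adjoint_inner_right]

end Stmt19Aux

end


theorem stmt19 {H : Type*} [NormedAddCommGroup H] [InnerProductSpace ℂ H] [CompleteSpace H]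
    (hinf : ¬ FiniteDimensional ℂ H)
    (V : H →L[ℂ] H) (hViso : ∀ x, ‖V x‖ = ‖x‖) (hVns : ¬ Function.Surjective V)
    (L : H →ₗ[ℂ] H) (hL : ∀ x y : H, (inner ℂ (V y) (L x) : ℂ) = 0) :
    ∃ Phi : (H →L[ℂ] H) → (H →L[ℂ] H),
      (∀ (n : ℕ) (x y : Fin n → H),
        Phi (∑ i, rankOne (x i) (y i)) = ∑ i, rankOne (V (x i)) (V (y i) + L (y i))) ∧
      (∀ A B : H →L[ℂ] H, FiniteDimensional ℂ (LinearMap.range (A : H →ₗ[ℂ] H)) →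
        FiniteDimensional ℂ (LinearMap.range (B : H →ₗ[ℂ] H)) →
        Phi (A + B) = Phi A + Phi B ∧ Phi (A * B) = Phi A * Phi B) ∧
      (∀ A : H →L[ℂ] H, FiniteDimensional ℂ (LinearMap.range (A : H →ₗ[ℂ] H)) →
        Module.rank ℂ (LinearMap.range (Phi A : H →ₗ[ℂ] H)) = Module.rank ℂ (LinearMap.range (A : H →ₗ[ℂ] H))) := by
  refine ⟨Stmt19Aux.PhiMap V L, ?_, ?_, ?_⟩
  · exact fun n x y => Stmt19Aux.PhiMap_sum V L n x y
  · exact fun A B hA hB =>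
      ⟨Stmt19Aux.PhiMap_add V L A B hA hB, Stmt19Aux.PhiMap_mul V hViso L hL A B hA hB⟩
  · intro A hA
    rw [Stmt19Aux.range_PhiMap V hViso L hL A hA]
    have hVinj : Function.Injective V := by
      intro a b hab
      have h1 := hViso (a - b)
      rw [map_sub, hab, sub_self, norm_zero] at h1
      exact sub_eq_zero.mp (norm_eq_zero.mp h1.symm)
    exact ((Submodule.equivMapOfInjective (V : H →ₗ[ℂ] H) hVinj
      (LinearMap.range (A : H →ₗ[ℂ] H))).rank_eq).symm
end
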